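/- For every l ∈ ℝ, every x ∈ L², every continuous function Φ : [0,1] → L² satisfying the Marcus integral equation Φ(t) = x + l ∫₀ᵗ ḡ(Φ(s)) ds for all t ∈ [0,1], and every t ∈ [0,1], the energy identity (1/2)‖Φ(t)‖_{L²}² = (1/2)‖x‖_{L²}² + l ∫₀ᵗ ⟨h, Φ(s)⟩_{L²} ds holds (here h is regarded as an element of L²); in particular the cross-product part of ḡ does not contribute, since ⟨v × h, v⟩_{L²} = 0 for all v ∈ L². -/

import Mathlib

open MeasureTheory
open scoped RealInnerProductSpace ENNReal

/-- The cross product on `ℝ³ = EuclideanSpace ℝ (Fin 3)`. -/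
noncomputable def cross3 (a b : EuclideanSpace ℝ (Fin 3)) : EuclideanSpace ℝ (Fin 3) :=
  WithLp.toLp 2 ![a 1 * b 2 - a 2 * b 1, a 2 * b 0 - a 0 * b 2, a 0 * b 1 - a 1 * b 0]

lemma cross3_inner_self (a b : EuclideanSpace ℝ (Fin 3)) : ⟪cross3 a b, a⟫ = 0 := by
  simp [cross3, PiLp.inner_apply, Fin.sum_univ_three]
  ring

lemma cross3_sub (a a' b : EuclideanSpace ℝ (Fin 3)) :
    cross3 (a - a') b = cross3 a b - cross3 a' b := by
  ext i
  fin_cases i <;> simp [cross3, PiLp.sub_apply] <;> ring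

lemma cross3_norm_le (a b : EuclideanSpace ℝ (Fin 3)) : ‖cross3 a b‖ ≤ ‖a‖ * ‖b‖ := by
  have h1 : ‖cross3 a b‖ ^ 2 ≤ (‖a‖ * ‖b‖) ^ 2 := by
    rw [mul_pow, ← real_inner_self_eq_norm_sq, ← real_inner_self_eq_norm_sq,
      ← real_inner_self_eq_norm_sq]
    simp only [cross3, PiLp.inner_apply, Fin.sum_univ_three, RCLike.inner_apply, conj_trivial, PiLp.toLp_apply]
    simp only [Matrix.cons_val_zero, Matrix.cons_val_one, Matrix.head_cons,
      Matrix.cons_val_two, Matrix.tail_cons]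
    nlinarith [sq_nonneg (a 0 * b 0 + a 1 * b 1 + a 2 * b 2)]
  exact (pow_le_pow_iff_left₀ (norm_nonneg _) (by positivity) two_ne_zero).mp h1

/-- energy identity for the Marcus flow; the cross-product part of `ḡ`
does not contribute since `⟨v × h, v⟩_{L²} = 0`. -/
theorem marcus_flow_energy_identity
    {𝒪 : Type*} [MeasurableSpace 𝒪] (μ : Measure 𝒪) [IsFiniteMeasure μ]
    (h : 𝒪 → EuclideanSpace ℝ (Fin 3)) (hmeas : Measurable h) (hbdd : MemLp h ⊤ μ)
    (gbar : Lp (EuclideanSpace ℝ (Fin 3)) 2 μ → Lp (EuclideanSpace ℝ (Fin 3)) 2 μ)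
    (hgbar : ∀ v, ∀ᵐ x ∂μ, gbar v x = cross3 (v x) (h x) + h x)
    (hL : Lp (EuclideanSpace ℝ (Fin 3)) 2 μ) (hhL : ⇑hL =ᵐ[μ] h) :
    (∀ (l : ℝ) (x : Lp (EuclideanSpace ℝ (Fin 3)) 2 μ)
        (Φ : ℝ → Lp (EuclideanSpace ℝ (Fin 3)) 2 μ),
        ContinuousOn Φ (Set.Icc 0 1) →
        (∀ t ∈ Set.Icc (0:ℝ) 1, Φ t = x + l • ∫ s in (0:ℝ)..t, gbar (Φ s)) →
        ∀ t ∈ Set.Icc (0:ℝ) 1,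
          (1/2) * ‖Φ t‖ ^ 2 = (1/2) * ‖x‖ ^ 2 + l * ∫ s in (0:ℝ)..t, ⟪hL, Φ s⟫)
    ∧ ∀ v : Lp (EuclideanSpace ℝ (Fin 3)) 2 μ,
        ∫ x, ⟪cross3 (v x) (h x), v x⟫ ∂μ = 0 := by
  -- essential sup bound
  set C : ℝ := (eLpNormEssSup h μ).toReal with hCdef
  have hfin : eLpNormEssSup h μ ≠ ⊤ := by
    have := hbdd.2
    rw [eLpNorm_exponent_top] at this
    exact this.ne
  have hCb : ∀ᵐ x ∂μ, ‖h x‖ ≤ C := by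
    filter_upwards [ae_le_eLpNormEssSup (f := h) (μ := μ)] with x hx
    have h2 : ((‖h x‖₊ : ℝ≥0∞)).toReal ≤ (eLpNormEssSup h μ).toReal :=
      ENNReal.toReal_mono hfin hx
    simpa using h2
  have hC0 : 0 ≤ C := ENNReal.toReal_nonneg
  -- gbar is Lipschitz
  have hlip : LipschitzWith (Real.toNNReal C) gbar := by
    apply LipschitzWith.of_dist_le_mul
    intro u v
    rw [dist_eq_norm, dist_eq_norm]
    have key : ‖gbar u - gbar v‖ ≤ ‖C • (u - v)‖ := by
      rw [Lp.norm_def, Lp.norm_def]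
      refine ENNReal.toReal_mono (Lp.eLpNorm_ne_top _) (eLpNorm_mono_ae ?_)
      filter_upwards [hgbar u, hgbar v, Lp.coeFn_sub (gbar u) (gbar v),
        Lp.coeFn_sub u v, Lp.coeFn_smul C (u - v), hCb] with x h1 h2 h3 h4 h5 h6
      rw [h3, h5, Pi.smul_apply, h4]
      simp only [Pi.sub_apply]
      rw [h1, h2]
      have heq : cross3 (u x) (h x) + h x - (cross3 (v x) (h x) + h x)
          = cross3 (u x - v x) (h x) := by rw [cross3_sub]; abel
      rw [heq, norm_smul, Real.norm_of_nonneg hC0]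
      have hb := cross3_norm_le (u x - v x) (h x)
      nlinarith [norm_nonneg (u x - v x)]
    calc ‖gbar u - gbar v‖ ≤ ‖C • (u - v)‖ := key
      _ = C * ‖u - v‖ := by rw [norm_smul, Real.norm_of_nonneg hC0]
      _ = (Real.toNNReal C : ℝ) * ‖u - v‖ := by rw [Real.coe_toNNReal _ hC0]
  -- key inner product identity
  have hkey : ∀ v : Lp (EuclideanSpace ℝ (Fin 3)) 2 μ, ⟪gbar v, v⟫ = ⟪hL, v⟫ := by
    intro v
    rw [L2.inner_def, L2.inner_def]
    apply integral_congr_ae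
    filter_upwards [hgbar v, hhL] with x h1 h2
    rw [h1, h2, inner_add_left, cross3_inner_self, zero_add]
  constructor
  · intro l x Φ hΦc hΦeq t ht
    have h0t : (0:ℝ) ≤ t := ht.1
    have ht1 : t ≤ 1 := ht.2
    have hx0 : Φ 0 = x := by
      have := hΦeq 0 ⟨le_refl 0, zero_le_one⟩
      simpa using this
    set g : ℝ → Lp (EuclideanSpace ℝ (Fin 3)) 2 μ := fun s => gbar (Φ s) with hg
    have hgc : ContinuousOn g (Set.Icc 0 1) := hlip.continuous.comp_continuousOn hΦc
    -- derivative of Φ on the interior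
    have hΦd : ∀ s ∈ Set.Ioo (0:ℝ) t, HasDerivAt Φ (l • g s) s := by
      intro s hs
      have hs1 : 0 < s := hs.1
      have hs2 : s < 1 := lt_of_lt_of_le hs.2 ht1
      have hmem : Set.Icc (0:ℝ) 1 ∈ nhds s := Icc_mem_nhds hs1 hs2
      have hint : IntervalIntegrable g MeasureTheory.volume 0 s := by
        apply ContinuousOn.intervalIntegrable
        rw [Set.uIcc_of_le hs1.le]
        exact hgc.mono (Set.Icc_subset_Icc le_rfl hs2.le)
      have hsm : StronglyMeasurableAtFilter g (nhds s) MeasureTheory.volume :=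
        (hgc.mono Set.Ioo_subset_Icc_self).stronglyMeasurableAtFilter isOpen_Ioo s ⟨hs1, hs2⟩
      have hca : ContinuousAt g s := hgc.continuousAt hmem
      have hF : HasDerivAt (fun u => ∫ r in (0:ℝ)..u, g r) (g s) s :=
        intervalIntegral.integral_hasDerivAt_right hint hsm hca
      have hF2 : HasDerivAt (fun u => x + l • ∫ r in (0:ℝ)..u, g r) (l • g s) s :=
        (hF.const_smul l).const_add x
      apply hF2.congr_of_eventuallyEq
      filter_upwards [hmem] with u hu
      exact hΦeq u hu
    -- energy derivative
    set E : ℝ → ℝ := fun u => ⟪Φ u, Φ u⟫ with hE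
    have hEd : ∀ s ∈ Set.Ioo (0:ℝ) t,
        HasDerivAt E ((2 * l) * ⟪hL, Φ s⟫) s := by
      intro s hs
      have hd := (hΦd s hs).inner ℝ (hΦd s hs)
      have h2 : ⟪Φ s, gbar (Φ s)⟫ = ⟪hL, Φ s⟫ := by
        rw [real_inner_comm]; exact hkey _
      have h3 : ⟪Φ s, l • g s⟫ + ⟪l • g s, Φ s⟫ = (2 * l) * ⟪hL, Φ s⟫ := by
        simp only [real_inner_smul_right, real_inner_smul_left, hg]
        rw [h2, hkey (Φ s)]
        ring
      rw [h3] at hd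
      exact hd
    have hΦc' : ContinuousOn Φ (Set.Icc 0 t) := hΦc.mono (Set.Icc_subset_Icc le_rfl ht1)
    have hEc : ContinuousOn E (Set.Icc 0 t) := hΦc'.inner hΦc'
    have hInt : IntervalIntegrable (fun s => (2 * l) * ⟪hL, Φ s⟫)
        MeasureTheory.volume 0 t := by
      apply ContinuousOn.intervalIntegrable
      rw [Set.uIcc_of_le h0t]
      exact (continuousOn_const.inner hΦc').const_smul (2 * l)
    have hftc := intervalIntegral.integral_eq_sub_of_hasDerivAt_of_le h0t hEc hEd hInt
    rw [intervalIntegral.integral_const_mul] at hftc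
    have hEt : E t = ‖Φ t‖ ^ 2 := real_inner_self_eq_norm_sq _
    have hE0 : E 0 = ‖x‖ ^ 2 := by rw [hE]; simp only [hx0]; exact real_inner_self_eq_norm_sq _
    rw [hEt, hE0] at hftc
    linarith
  · intro v
    have : ∀ x, ⟪cross3 (v x) (h x), v x⟫ = 0 := fun x => cross3_inner_self _ _
    simp [this]
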